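/- Suppose F is twice differentiable, ‖∇²F(x_t + τ s_t) - ∇²F(x_t)‖ ≤ L τ‖s_t‖ for τ ∈ [0,1], ‖(∇²F(x_t) - H_t)s_t‖ ≤ ε_t‖s_t‖, and σ_t ≤ 2γL. Let ∇m_t(s_t) = ∇F(x_t) + H_t s_t + σ_t‖s_t‖s_t. Then ‖∇F(x_t + s_t) - ∇m_t(s_t)‖ ≤ (L/2 + 2γL)‖s_t‖² + ε_t‖s_t‖. -/

import Mathlib

open scoped InnerProductSpace

/-- Bound on the gradient of the objective at the trial point against the gradient of the
cubic model: `‖∇F(x_t + s_t) - ∇m_t(s_t)‖ ≤ (L/2 + 2γL)‖s_t‖² + ε_t‖s_t‖`. -/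
theorem cubic_model_gradient_bound {d : ℕ}
    (F : EuclideanSpace ℝ (Fin d) → ℝ)
    (Hess : EuclideanSpace ℝ (Fin d) →
      (EuclideanSpace ℝ (Fin d) →L[ℝ] EuclideanSpace ℝ (Fin d)))
    (hF1 : ∀ x, HasGradientAt F (gradient F x) x)
    (hF2 : ∀ x, HasFDerivAt (gradient F) (Hess x) x)
    (xt st : EuclideanSpace ℝ (Fin d)) (L εt γ σt : ℝ)
    (hL : 0 < L) (hεt : 0 ≤ εt) (hγ : 1 < γ) (hσpos : 0 < σt)
    (hLip : ∀ τ : ℝ, τ ∈ Set.Icc (0 : ℝ) 1 →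
      ‖Hess (xt + τ • st) - Hess xt‖ ≤ L * τ * ‖st‖)
    (Ht : EuclideanSpace ℝ (Fin d) →L[ℝ] EuclideanSpace ℝ (Fin d))
    (hHt : ‖(Hess xt - Ht) st‖ ≤ εt * ‖st‖)
    (hσ : σt ≤ 2 * γ * L) :
    ‖gradient F (xt + st) - (gradient F xt + Ht st + (σt * ‖st‖) • st)‖ ≤
      (L / 2 + 2 * γ * L) * ‖st‖ ^ 2 + εt * ‖st‖ := by
  set g := gradient F with hg
  set f : ℝ → EuclideanSpace ℝ (Fin d) :=
    fun τ => g (xt + τ • st) - g xt - τ • (Hess xt st) with hf_def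
  have hline : ∀ τ : ℝ, HasDerivAt (fun τ : ℝ => xt + τ • st) st τ := by
    intro τ
    simpa using ((hasDerivAt_id τ).smul_const st).const_add xt
  have hderiv : ∀ τ : ℝ, HasDerivAt f ((Hess (xt + τ • st)) st - Hess xt st) τ := by
    intro τ
    have h1 : HasDerivAt (fun τ : ℝ => g (xt + τ • st)) ((Hess (xt + τ • st)) st) τ := by
      exact (hF2 (xt + τ • st)).comp_hasDerivAt τ (hline τ)
    have h2 := (h1.sub (hasDerivAt_const τ (g xt))).sub
      ((hasDerivAt_id τ).smul_const (Hess xt st))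
    simp only [sub_zero, one_smul] at h2
    exact h2
  have hB : ∀ τ : ℝ, HasDerivAt (fun τ => L * ‖st‖ ^ 2 / 2 * τ ^ 2)
      (L * ‖st‖ ^ 2 * τ) τ := by
    intro τ
    have := (hasDerivAt_pow 2 τ).const_mul (L * ‖st‖ ^ 2 / 2)
    exact this.congr_deriv (by simp only [Nat.cast_ofNat, show (2:ℕ) - 1 = 1 from rfl, pow_one]; ring)
  have key : ∀ τ ∈ Set.Icc (0:ℝ) 1, ‖f τ‖ ≤ L * ‖st‖ ^ 2 / 2 * τ ^ 2 := by
    apply image_norm_le_of_norm_deriv_right_le_deriv_boundary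
      (f' := fun τ => (Hess (xt + τ • st)) st - Hess xt st)
      (fun τ _ => (hderiv τ).continuousAt.continuousWithinAt)
      (fun τ _ => (hderiv τ).hasDerivWithinAt)
      (by simp [hf_def]) hB
    intro τ hτ
    have hτ' : τ ∈ Set.Icc (0:ℝ) 1 := ⟨hτ.1, hτ.2.le⟩
    calc ‖(Hess (xt + τ • st)) st - Hess xt st‖
        = ‖(Hess (xt + τ • st) - Hess xt) st‖ := by simp
      _ ≤ ‖Hess (xt + τ • st) - Hess xt‖ * ‖st‖ :=
          ContinuousLinearMap.le_opNorm _ _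
      _ ≤ (L * τ * ‖st‖) * ‖st‖ := by
          gcongr
          exact hLip τ hτ'
      _ = L * ‖st‖ ^ 2 * τ := by ring
  have h1 : ‖g (xt + st) - g xt - Hess xt st‖ ≤ L / 2 * ‖st‖ ^ 2 := by
    have := key 1 ⟨zero_le_one, le_refl 1⟩
    simpa [hf_def] using this.trans_eq (by ring)
  have hσs : ‖(σt * ‖st‖) • st‖ ≤ 2 * γ * L * ‖st‖ ^ 2 := by
    rw [norm_smul]
    have h0 : ‖(σt * ‖st‖ : ℝ)‖ = σt * ‖st‖ := by
      rw [Real.norm_eq_abs, abs_of_nonneg (mul_nonneg hσpos.le (norm_nonneg _))]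
    rw [h0]
    calc σt * ‖st‖ * ‖st‖ ≤ 2 * γ * L * ‖st‖ * ‖st‖ := by gcongr
      _ = 2 * γ * L * ‖st‖ ^ 2 := by ring
  have hsplit : g (xt + st) - (g xt + Ht st + (σt * ‖st‖) • st)
      = (g (xt + st) - g xt - Hess xt st) + (Hess xt - Ht) st - (σt * ‖st‖) • st := by
    simp only [ContinuousLinearMap.sub_apply]
    abel
  calc ‖g (xt + st) - (g xt + Ht st + (σt * ‖st‖) • st)‖
      = ‖(g (xt + st) - g xt - Hess xt st) + (Hess xt - Ht) st - (σt * ‖st‖) • st‖ := by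
        rw [hsplit]
    _ ≤ ‖(g (xt + st) - g xt - Hess xt st) + (Hess xt - Ht) st‖ + ‖(σt * ‖st‖) • st‖ :=
        norm_sub_le _ _
    _ ≤ (‖g (xt + st) - g xt - Hess xt st‖ + ‖(Hess xt - Ht) st‖) + ‖(σt * ‖st‖) • st‖ := by
        gcongr
        exact norm_add_le _ _
    _ ≤ (L / 2 * ‖st‖ ^ 2 + εt * ‖st‖) + 2 * γ * L * ‖st‖ ^ 2 := by
        gcongr
    _ = (L / 2 + 2 * γ * L) * ‖st‖ ^ 2 + εt * ‖st‖ := by ring
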